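/- arXiv:0904.0529 — 6 statements merged into one kernel-verified Lean document; each statement's English description precedes it below -/
import Mathlib

section
/- Let L be a free abelian group with a symmetric bilinear form, K ∈ L, χ(D) = 1 + (1/2)(D.D - K.D), and E_1, ..., E_n ∈ L with χ(E_j - E_i) = 0 for all i > j. Define A_i = E_{i+1} - E_i for 1 ≤ i < n and A_n = -K - (A_1 + ... + A_{n-1}). Then A_i . A_{i+1} = 1 for 1 ≤ i < n, and A_n . A_1 = 1. -/
/-- From an exceptional-sequence condition χ(E_j - E_i) = 0 for i > j,
the differences A_i = E_{i+1} - E_i (1 ≤ i < n) and A_n = -K - Σ A_i satisfy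
A_i . A_{i+1} = 1 for 1 ≤ i < n and A_n . A_1 = 1. -/
theorem toric_system_adjacent_pairing (L : Type*) [AddCommGroup L] [Module.Free ℤ L]
    (B : L →+ L →+ ℚ) (hsym : ∀ x y, B x y = B y x) (K : L)
    (χ : L → ℚ) (hχ : ∀ D, χ D = 1 + (B D D - B K D) / 2)
    (n : ℕ) (hn : 3 ≤ n) (E A : ℕ → L)
    (hE : ∀ i j, 1 ≤ j → j < i → i ≤ n → χ (E j - E i) = 0)
    (hA : ∀ i, 1 ≤ i → i < n → A i = E (i + 1) - E i)
    (hAn : A n = -K - ∑ i ∈ Finset.Ico 1 n, A i) :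
    (∀ i, 1 ≤ i → i < n → B (A i) (A (i + 1)) = 1) ∧ B (A n) (A 1) = 1 := by
  -- key numerical fact
  have hg : ∀ i j, 1 ≤ j → j < i → i ≤ n →
      B (E j) (E j) - B (E j) (E i) - (B (E i) (E j) - B (E i) (E i))
        - (B K (E j) - B K (E i)) = -2 := by
    intro i j h1 h2 h3
    have h0 := hE i j h1 h2 h3
    rw [hχ] at h0
    simp only [map_sub, AddMonoidHom.sub_apply] at h0
    linarith
  -- telescoping sum
  have hsum : ∑ i ∈ Finset.Ico 1 n, A i = E n - E 1 := by
    have h1 : ∑ i ∈ Finset.Ico 1 n, A i = ∑ i ∈ Finset.Ico 1 n, (E (i + 1) - E i) := by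
      refine Finset.sum_congr rfl ?_
      intro i hi
      rw [Finset.mem_Ico] at hi
      exact hA i hi.1 hi.2
    rw [h1, Finset.sum_Ico_eq_sum_range]
    have h2 : ∀ m, ∑ i ∈ Finset.range m, (E (1 + i + 1) - E (1 + i)) = E (1 + m) - E 1 := by
      intro m
      induction m with
      | zero => simp
      | succ k ih => rw [Finset.sum_range_succ, ih]; abel
    rw [h2, show 1 + (n - 1) = n by omega]
  have hAn' : A n = E 1 - E n - K := by rw [hAn, hsum]; abel
  constructor
  · intro i hi1 hin
    rcases lt_or_eq_of_le (Nat.succ_le_of_lt hin) with h | h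
    · -- i + 1 < n
      rw [hA i hi1 hin, hA (i+1) (by omega) h]
      have g1 := hg (i+1) i hi1 (by omega) (by omega)
      have g2 := hg (i+2) i hi1 (by omega) (by omega)
      have g3 := hg (i+2) (i+1) (by omega) (by omega) (by omega)
      have s1 := hsym (E i) (E (i+1))
      have s2 := hsym (E i) (E (i+2))
      have s3 := hsym (E (i+1)) (E (i+2))
      simp only [map_sub, AddMonoidHom.sub_apply, show i + 1 + 1 = i + 2 from rfl] at *
      linarith
    · -- i + 1 = n
      rw [hA i hi1 hin, show i + 1 = n from h, hAn']
      have g1 := hg n 1 le_rfl (by omega) le_rfl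
      have g2 := hg i 1 le_rfl (by omega) (by omega)
      have g3 := hg n i (by omega) (by omega) le_rfl
      have s1 := hsym (E 1) (E i)
      have s2 := hsym (E 1) (E n)
      have s3 := hsym (E i) (E n)
      have s4 := hsym (E i) K
      have s5 := hsym (E n) K
      have hin' : i + 1 = n := h
      simp only [map_sub, AddMonoidHom.sub_apply, hin'] at *
      linarith
  · rw [hAn', hA 1 le_rfl (by omega)]
    have g1 := hg 2 1 le_rfl (by omega) (by omega)
    have g2 := hg n 1 le_rfl (by omega) le_rfl
    have g3 := hg n 2 (by omega) (by omega) le_rfl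
    have s1 := hsym (E 1) (E 2)
    have s2 := hsym (E 1) (E n)
    have s3 := hsym (E 2) (E n)
    have s4 := hsym (E 1) K
    have s5 := hsym (E 2) K
    simp only [map_sub, AddMonoidHom.sub_apply, show (1:ℕ)+1 = 2 from rfl] at *
    linarith
end

section
/- Let L be a free abelian group with a symmetric bilinear form, K ∈ L, χ(D) = 1 + (1/2)(D.D - K.D), and E_1, ..., E_n ∈ L with χ(E_j - E_i) = 0 for all i > j. Define A_i = E_{i+1} - E_i for 1 ≤ i < n and A_n = -K - (A_1 + ... + A_{n-1}). Then A_i . A_j = 0 whenever 1 ≤ i < j ≤ n and (i,j) is not of the form (k, k+1) and not (1, n). -/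
/-- With A_i as differences of an exceptional sequence and
A_n = -K - Σ A_i, non-cyclically-adjacent pairs are orthogonal: A_i . A_j = 0
for 1 ≤ i < j ≤ n with j ≠ i + 1 and (i,j) ≠ (1,n). -/
theorem toric_system_orthogonality (L : Type*) [AddCommGroup L] [Module.Free ℤ L]
    (B : L →+ L →+ ℚ) (hsym : ∀ x y, B x y = B y x) (K : L)
    (χ : L → ℚ) (hχ : ∀ D, χ D = 1 + (B D D - B K D) / 2)
    (n : ℕ) (hn : 3 ≤ n) (E A : ℕ → L)
    (hE : ∀ i j, 1 ≤ j → j < i → i ≤ n → χ (E j - E i) = 0)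
    (hA : ∀ i, 1 ≤ i → i < n → A i = E (i + 1) - E i)
    (hAn : A n = -K - ∑ i ∈ Finset.Ico 1 n, A i) :
    ∀ i j, 1 ≤ i → i < j → j ≤ n → j ≠ i + 1 → ¬(i = 1 ∧ j = n) →
      B (A i) (A j) = 0 := by
  have g : ∀ a b, 1 ≤ a → a < b → b ≤ n →
      B (E a) (E b) * 2 = B (E a) (E a) + B (E b) (E b)
        - B K (E a) + B K (E b) + 2 := by
    intro a b ha hab hbn
    have h := hE b a ha hab hbn
    rw [hχ] at h
    simp only [map_sub, AddMonoidHom.sub_apply] at h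
    have hs := hsym (E a) (E b)
    linarith
  intro i j h1i hij hjn hne hne2
  rcases eq_or_lt_of_le hjn with hjn' | hjn'
  · -- j = n
    subst hjn'
    have hi1 : i ≠ 1 := fun h => hne2 ⟨h, rfl⟩
    have hin : i + 1 < j := lt_of_le_of_ne hij (Ne.symm hne)
    have hsum : ∑ m ∈ Finset.Ico 1 j, A m = E j - E 1 := by
      rw [Finset.sum_congr rfl
        (fun m hm => hA m (Finset.mem_Ico.mp hm).1 (Finset.mem_Ico.mp hm).2)]
      rw [Finset.sum_Ico_eq_sub _ (by omega : 1 ≤ j), Finset.sum_range_sub,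
        Finset.sum_range_one]
      abel
    rw [hAn, hsum, hA i h1i (by omega)]
    simp only [map_sub, map_neg, AddMonoidHom.sub_apply, AddMonoidHom.neg_apply]
    have g1 := g 1 i le_rfl (by omega) (by omega)
    have g2 := g 1 (i + 1) le_rfl (by omega) (by omega)
    have g3 := g i j h1i hij le_rfl
    have g4 := g (i + 1) j (by omega) hin le_rfl
    have s1 := hsym (E (i + 1)) K
    have s2 := hsym (E i) K
    have s3 := hsym (E (i + 1)) (E 1)
    have s4 := hsym (E i) (E 1)
    linarith
  · -- j < n
    have hij' : i + 1 < j := lt_of_le_of_ne hij (Ne.symm hne)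
    rw [hA i h1i (by omega), hA j (by omega) hjn']
    simp only [map_sub, AddMonoidHom.sub_apply]
    have g1 := g i j h1i hij (le_of_lt hjn')
    have g2 := g i (j + 1) h1i (by omega) hjn'
    have g3 := g (i + 1) j (by omega) hij' (le_of_lt hjn')
    have g4 := g (i + 1) (j + 1) (by omega) (by omega) hjn'
    linarith
end

section
/- Let L be a free abelian group with a symmetric bilinear form, K ∈ L. If A_1, ..., A_n ∈ L form a toric system (A_i . A_{i+1} = 1 cyclically, A_i . A_j = 0 for non-cyclically-adjacent distinct i, j, and A_1 + ... + A_n = -K), and χ(D) = 1 + (1/2)(D.D - K.D), then setting E_1 = 0 and E_{j} = A_1 + ... + A_{j-1} for 2 ≤ j ≤ n, we have χ(E_j - E_i) = 0 for all i > j. -/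
/-- A toric system A_1, ..., A_n gives rise, via E_1 = 0 and
E_j = A_1 + ... + A_{j-1}, to divisors with χ(E_j - E_i) = 0 for all i > j. -/
theorem toric_system_gives_exceptional (L : Type*) [AddCommGroup L] [Module.Free ℤ L]
    (B : L →+ L →+ ℚ) (hsym : ∀ x y, B x y = B y x) (K : L)
    (χ : L → ℚ) (hχ : ∀ D, χ D = 1 + (B D D - B K D) / 2)
    (n : ℕ) (hn : 3 ≤ n) (A : ℕ → L)
    (hadj : ∀ i, 1 ≤ i → i < n → B (A i) (A (i + 1)) = 1)
    (hadjn : B (A n) (A 1) = 1)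
    (horth : ∀ i j, 1 ≤ i → i < j → j ≤ n → j ≠ i + 1 → ¬(i = 1 ∧ j = n) →
      B (A i) (A j) = 0)
    (hsum : ∑ i ∈ Finset.Icc 1 n, A i = -K)
    (E : ℕ → L) (hEdef : ∀ j, E j = ∑ k ∈ Finset.Ico 1 j, A k) :
    ∀ i j, 1 ≤ j → j < i → i ≤ n → χ (E j - E i) = 0 := by
  -- generic vanishing lemma
  have hzero : ∀ k l, 1 ≤ k → 1 ≤ l → k ≤ n → l ≤ n → k ≠ l → l ≠ k + 1 → k ≠ l + 1 →
      ¬(k = 1 ∧ l = n) → ¬(l = 1 ∧ k = n) → B (A k) (A l) = 0 := by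
    intro k l hk hl hkn hln hne h1 h2 h3 h4
    rcases lt_or_gt_of_ne hne with h | h
    · exact horth k l hk h hln h1 h3
    · rw [hsym]; exact horth l k hl h hkn h2 h4
  -- a sum over Icc 1 n concentrated in three points
  have key : ∀ (f : ℕ → ℚ) (p l q : ℕ), p ∈ Finset.Icc 1 n → l ∈ Finset.Icc 1 n →
      q ∈ Finset.Icc 1 n → p ≠ l → p ≠ q → l ≠ q →
      (∀ k ∈ Finset.Icc 1 n, k ≠ p → k ≠ l → k ≠ q → f k = 0) →
      ∑ k ∈ Finset.Icc 1 n, f k = f p + f l + f q := by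
    intro f p l q hp hl hq hpl hpq hlq hz
    rw [← Finset.sum_subset (show ({p, l, q} : Finset ℕ) ⊆ Finset.Icc 1 n by
      intro x hx; simp only [Finset.mem_insert, Finset.mem_singleton] at hx
      rcases hx with rfl | rfl | rfl <;> assumption)]
    · rw [Finset.sum_insert (by simp [hpl, hpq]), Finset.sum_insert (by simp [hlq]),
        Finset.sum_singleton]; ring
    · intro x hx hx2
      simp only [Finset.mem_insert, Finset.mem_singleton, not_or] at hx2
      exact hz x hx hx2.1 hx2.2.1 hx2.2.2
  -- row sums of the intersection matrix
  have hTA : ∀ l, 1 ≤ l → l ≤ n → ∑ k ∈ Finset.Icc 1 n, B (A k) (A l)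
      = B (A l) (A l) + 2 := by
    intro l hl hln
    by_cases hl1 : l = 1
    · subst hl1
      rw [key (fun k => B (A k) (A 1)) n 1 2 (by simp; omega) (by simp; omega)
        (by simp; omega) (by omega) (by omega) (by omega) ?_]
      · have h2 : B (A 2) (A 1) = 1 := by rw [hsym]; exact hadj 1 le_rfl (by omega)
        rw [hadjn, h2]; ring
      · intro k hk hk1 hk2 hk3
        simp only [Finset.mem_Icc] at hk
        exact hzero k 1 hk.1 le_rfl hk.2 (by omega) hk2 (by omega) (by omega)
          (by omega) (by omega)
    · by_cases hln' : l = n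
      · subst hln'
        rw [key (fun k => B (A k) (A l)) (l-1) l 1 (by simp; omega) (by simp; omega)
          (by simp; omega) (by omega) (by omega) (by omega) ?_]
        · have h1 : B (A (l-1)) (A l) = 1 := by
            have := hadj (l-1) (by omega) (by omega)
            rwa [show l - 1 + 1 = l by omega] at this
          have h2 : B (A 1) (A l) = 1 := by rw [hsym]; exact hadjn
          rw [h1, h2]; ring
        · intro k hk hk1 hk2 hk3
          simp only [Finset.mem_Icc] at hk
          exact hzero k l hk.1 (by omega) hk.2 le_rfl hk2 (by omega) (by omega)
            (by omega) (by omega)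
      · rw [key (fun k => B (A k) (A l)) (l-1) l (l+1) (by simp; omega) (by simp; omega)
          (by simp; omega) (by omega) (by omega) (by omega) ?_]
        · have h1 : B (A (l-1)) (A l) = 1 := by
            have := hadj (l-1) (by omega) (by omega)
            rwa [show l - 1 + 1 = l by omega] at this
          have h2 : B (A (l+1)) (A l) = 1 := by rw [hsym]; exact hadj l hl (by omega)
          rw [h1, h2]; ring
        · intro k hk hk1 hk2 hk3
          simp only [Finset.mem_Icc] at hk
          exact hzero k l hk.1 hl hk.2 hln hk2 (by omega) (by omega)
            (by omega) (by omega)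
  intro i j h1j hji hin
  -- pairing of a partial sum against the next element
  have hSA : ∀ i', j + 1 ≤ i' → i' < n → B (∑ k ∈ Finset.Ico j i', A k) (A i') = 1 := by
    intro i' hji' hi'n
    obtain ⟨m, rfl⟩ : ∃ m, i' = m + 1 := ⟨i' - 1, by omega⟩
    rw [map_sum, AddMonoidHom.finset_sum_apply,
      Finset.sum_Ico_succ_top (by omega : j ≤ m)]
    have h0 : ∑ l ∈ Finset.Ico j m, B (A l) (A (m+1)) = 0 := by
      apply Finset.sum_eq_zero
      intro l hl
      simp only [Finset.mem_Ico] at hl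
      exact hzero l (m+1) (by omega) (by omega) (by omega) (by omega) (by omega)
        (by omega) (by omega) (by omega) (by omega)
    rw [h0, hadj m (by omega) (by omega)]; ring
  -- self-pairing of partial sums
  have hself : ∀ i', j + 1 ≤ i' → i' ≤ n →
      B (∑ k ∈ Finset.Ico j i', A k) (∑ k ∈ Finset.Ico j i', A k)
        = (∑ l ∈ Finset.Ico j i', B (A l) (A l)) + 2 * ((i' - (j+1) : ℕ) : ℚ) := by
    intro i' hi'
    induction i', hi' using Nat.le_induction with
    | base =>
      intro _
      rw [show Finset.Ico j (j+1) = {j} from by ext x; rw [Finset.mem_Ico, Finset.mem_singleton]; omega]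
      simp
    | succ m hjm ih =>
      intro hmn
      have hBS := ih (by omega)
      rw [Finset.sum_Ico_succ_top (by omega : j ≤ m)]
      simp only [map_add, AddMonoidHom.add_apply]
      have h1 : B (∑ k ∈ Finset.Ico j m, A k) (A m) = 1 := hSA m hjm (by omega)
      have h2 : B (A m) (∑ k ∈ Finset.Ico j m, A k) = 1 := by rw [hsym]; exact h1
      rw [hBS, h1, h2, Finset.sum_Ico_succ_top (by omega : j ≤ m)]
      have hc : ((m + 1 - (j+1) : ℕ) : ℚ) = ((m - (j+1) : ℕ) : ℚ) + 1 := by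
        rw [show m + 1 - (j+1) = (m - (j+1)) + 1 by omega]; push_cast; ring
      rw [hc]; ring
  have hjle : j + 1 ≤ i := hji
  have hE : E j - E i = -∑ k ∈ Finset.Ico j i, A k := by
    rw [hEdef, hEdef, ← Finset.sum_Ico_consecutive A h1j hji.le]
    abel
  have hK : K = -∑ k ∈ Finset.Icc 1 n, A k := by rw [hsum, neg_neg]
  have hTS : B (∑ k ∈ Finset.Icc 1 n, A k) (∑ k ∈ Finset.Ico j i, A k)
      = (∑ l ∈ Finset.Ico j i, B (A l) (A l)) + 2 * ((i - j : ℕ) : ℚ) := by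
    rw [map_sum]
    have hrow : ∀ l ∈ Finset.Ico j i, B (∑ k ∈ Finset.Icc 1 n, A k) (A l)
        = B (A l) (A l) + 2 := by
      intro l hl
      simp only [Finset.mem_Ico] at hl
      rw [map_sum, AddMonoidHom.finset_sum_apply]
      exact hTA l (by omega) (by omega)
    rw [Finset.sum_congr rfl hrow, Finset.sum_add_distrib, Finset.sum_const,
      Nat.card_Ico, nsmul_eq_mul]
    ring
  have hSS := hself i hjle hin
  rw [hE, hχ]
  simp only [map_neg, AddMonoidHom.neg_apply, neg_neg]
  rw [hK]
  simp only [map_neg, AddMonoidHom.neg_apply]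
  rw [hSS, hTS]
  have e1 : ((i - (j+1) : ℕ) : ℚ) = (i : ℚ) - (j : ℚ) - 1 := by
    rw [Nat.cast_sub hjle]; push_cast; ring
  have e2 : ((i - j : ℕ) : ℚ) = (i : ℚ) - (j : ℚ) := by
    rw [Nat.cast_sub hji.le]
  rw [e1, e2]; ring
end

section
/- In the lattice ℤ^{2+t} with basis P, Q, R_1, ..., R_t, bilinear form P² = 0, Q² = a, P.Q = 1, R_i² = -1, all other products of distinct basis elements 0, and canonical class K = (a-2)P - 2Q + ΣR_i, for 0 ≤ r ≤ t the tuple (R_r, R_{r-1} - R_r, ..., R_1 - R_2, P - R_1, sP + Q, P - R_{r+1}, R_{r+1} - R_{r+2}, ..., R_{t-1} - R_t, R_t, -(a+s)P + Q - Σ_{i=1}^t R_i) is a toric system. -/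
namespace Stmt8

/-- Basis vectors of ℤ^{2+t} as finitely supported sequences:
index 0 is P, index 1 is Q, index i+1 is R_i for 1 ≤ i ≤ t. -/
def e (i : ℕ) : ℕ → ℤ := fun j => if j = i then 1 else 0

def P : ℕ → ℤ := e 0
def Q : ℕ → ℤ := e 1
def R (i : ℕ) : ℕ → ℤ := e (i + 1)

/-- The intersection form: P² = 0, Q² = a, P.Q = 1, R_i² = -1, other
products of distinct basis vectors 0. -/
def form (a : ℤ) (t : ℕ) (x y : ℕ → ℤ) : ℤ :=
  x 0 * y 1 + x 1 * y 0 + a * x 1 * y 1 - ∑ i ∈ Finset.Icc 2 (t + 1), x i * y i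

/-- The canonical class K = (a-2)P - 2Q + R_1 + ... + R_t. -/
def K (a : ℤ) (t : ℕ) : ℕ → ℤ :=
  (a - 2) • P + (-2 : ℤ) • Q + ∑ i ∈ Finset.Icc 1 t, R i

/-- The tuple (R_r, R_{r-1} - R_r, ..., R_1 - R_2, P - R_1, sP + Q,
P - R_{r+1}, R_{r+1} - R_{r+2}, ..., R_{t-1} - R_t, R_t,
-(a+s)P + Q - Σ_{i=1}^t R_i), indexed by k = 1, ..., t + 4
(degenerate blocks collapse to P for r = 0 resp. r = t). -/
def A (a s : ℤ) (t r : ℕ) (k : ℕ) : ℕ → ℤ :=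
  if k = t + 4 then (-(a + s)) • P + Q - ∑ i ∈ Finset.Icc 1 t, R i
  else if k = r + 2 then s • P + Q
  else if k < r + 2 then
    (if r = 0 then P
     else if k = 1 then R r
     else if k ≤ r then R (r - k + 1) - R (r - k + 2)
     else P - R 1)
  else
    (if r = t then P
     else if k = r + 3 then P - R (r + 1)
     else if k ≤ t + 2 then R (k - 3) - R (k - 2)
     else R t)

section Helpers
variable (a : ℤ) (t : ℕ)

lemma form_add_left (x y z : ℕ → ℤ) : form a t (x + y) z = form a t x z + form a t y z := by
  unfold form; simp only [Pi.add_apply, add_mul]; rw [Finset.sum_add_distrib]; ring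

lemma form_add_right (x y z : ℕ → ℤ) : form a t x (y + z) = form a t x y + form a t x z := by
  unfold form; simp only [Pi.add_apply, mul_add]; rw [Finset.sum_add_distrib]; ring

lemma form_sub_left (x y z : ℕ → ℤ) : form a t (x - y) z = form a t x z - form a t y z := by
  unfold form; simp only [Pi.sub_apply, sub_mul]; rw [Finset.sum_sub_distrib]; ring

lemma form_sub_right (x y z : ℕ → ℤ) : form a t x (y - z) = form a t x y - form a t x z := by
  unfold form; simp only [Pi.sub_apply, mul_sub]; rw [Finset.sum_sub_distrib]; ring

lemma form_smul_left (c : ℤ) (x z : ℕ → ℤ) : form a t (c • x) z = c * form a t x z := by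
  unfold form; simp only [Pi.smul_apply, smul_eq_mul]
  rw [mul_sub, Finset.mul_sum]; ring_nf

lemma form_smul_right (c : ℤ) (x z : ℕ → ℤ) : form a t x (c • z) = c * form a t x z := by
  unfold form; simp only [Pi.smul_apply, smul_eq_mul]
  rw [mul_sub, Finset.mul_sum]; ring_nf

lemma form_zero_right (x : ℕ → ℤ) : form a t x 0 = 0 := by unfold form; simp
lemma form_zero_left (x : ℕ → ℤ) : form a t 0 x = 0 := by unfold form; simp

lemma form_sum_right (x : ℕ → ℤ) (s : Finset ℕ) (f : ℕ → ℕ → ℤ) :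
    form a t x (∑ i ∈ s, f i) = ∑ i ∈ s, form a t x (f i) := by
  classical
  induction s using Finset.induction_on with
  | empty => simp [form_zero_right]
  | insert _ _ h ih => rw [Finset.sum_insert h, Finset.sum_insert h, form_add_right, ih]

lemma form_sum_left (x : ℕ → ℤ) (s : Finset ℕ) (f : ℕ → ℕ → ℤ) :
    form a t (∑ i ∈ s, f i) x = ∑ i ∈ s, form a t (f i) x := by
  classical
  induction s using Finset.induction_on with
  | empty => simp [form_zero_left]
  | insert _ _ h ih => rw [Finset.sum_insert h, Finset.sum_insert h, form_add_left, ih]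

lemma sum_zero_of_left_zero {i t : ℕ} (h : i < 2) (y : ℕ → ℤ) :
    ∑ m ∈ Finset.Icc 2 (t+1), e i m * y m = 0 := by
  rw [Finset.sum_eq_zero]; intro m hm
  simp only [Finset.mem_Icc] at hm
  unfold e; rw [if_neg (by omega)]; ring

lemma sum_zero_of_right_zero {i t : ℕ} (h : i < 2) (y : ℕ → ℤ) :
    ∑ m ∈ Finset.Icc 2 (t+1), y m * e i m = 0 := by
  rw [Finset.sum_eq_zero]; intro m hm
  simp only [Finset.mem_Icc] at hm
  unfold e; rw [if_neg (by omega)]; ring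

lemma form_P_P : form a t P P = 0 := by
  unfold form P; rw [sum_zero_of_left_zero (by omega)]; unfold e; norm_num

lemma form_P_Q : form a t P Q = 1 := by
  unfold form P Q; rw [sum_zero_of_left_zero (by omega)]; unfold e; norm_num

lemma form_Q_P : form a t Q P = 1 := by
  unfold form P Q; rw [sum_zero_of_left_zero (by omega)]; unfold e; norm_num

lemma form_Q_Q : form a t Q Q = a := by
  unfold form Q; rw [sum_zero_of_left_zero (by omega)]; unfold e; norm_num

lemma form_P_R (i : ℕ) : form a t P (R i) = if i = 0 then 1 else 0 := by
  unfold form P R; rw [sum_zero_of_left_zero (by omega)]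
  unfold e
  by_cases h : i = 0 <;> simp [h]

lemma form_R_P (i : ℕ) : form a t (R i) P = if i = 0 then 1 else 0 := by
  unfold form P R; rw [sum_zero_of_right_zero (by omega)]
  unfold e
  by_cases h : i = 0 <;> simp [h]

lemma form_Q_R (i : ℕ) : form a t Q (R i) = if i = 0 then a else 0 := by
  unfold form Q R; rw [sum_zero_of_left_zero (by omega)]
  unfold e
  by_cases h : i = 0 <;> simp [h]

lemma form_R_Q (i : ℕ) : form a t (R i) Q = if i = 0 then a else 0 := by
  unfold form Q R; rw [sum_zero_of_right_zero (by omega)]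
  unfold e
  by_cases h : i = 0 <;> simp [h]

lemma sum_prod_e (i j : ℕ) : ∑ m ∈ Finset.Icc 2 (t+1),
    (if m = i+1 then (1:ℤ) else 0) * (if m = j+1 then 1 else 0)
    = if i = j ∧ 1 ≤ i ∧ i ≤ t then 1 else 0 := by
  by_cases h : i = j ∧ 1 ≤ i ∧ i ≤ t
  · obtain ⟨rfl, h1, h2⟩ := h
    rw [if_pos ⟨rfl, h1, h2⟩, Finset.sum_eq_single (i+1)]
    · simp
    · intro m hm hne; rw [if_neg hne]; ring
    · intro hni; exact absurd (Finset.mem_Icc.mpr (by omega)) hni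
  · rw [if_neg h, Finset.sum_eq_zero]; intro m hm
    simp only [Finset.mem_Icc] at hm
    by_cases hij : i = j
    · subst hij
      rcases eq_or_ne m (i+1) with rfl | hne
      · exact absurd ⟨rfl, by omega, by omega⟩ h
      · rw [if_neg hne]; ring
    · rcases eq_or_ne m (i+1) with rfl | hne
      · rw [if_neg (show ¬(i+1 = j+1) by omega)]; ring
      · rw [if_neg hne]; ring

lemma form_R_R (i j : ℕ) : form a t (R i) (R j) =
    (if i = 0 ∧ j = 0 then a else 0) + (if i = j ∧ 1 ≤ i ∧ i ≤ t then -1 else 0) := by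
  unfold form R e
  rw [sum_prod_e]
  rw [if_neg (show ¬(0:ℕ) = i+1 by omega), if_neg (show ¬(0:ℕ) = j+1 by omega)]
  have e1 : (if (1:ℕ) = i+1 then (1:ℤ) else 0) = (if i = 0 then 1 else 0) := by
    split_ifs <;> omega
  have e2 : (if (1:ℕ) = j+1 then (1:ℤ) else 0) = (if j = 0 then 1 else 0) := by
    split_ifs <;> omega
  rw [e1, e2]
  split_ifs <;> (first | omega | ring | (exfalso; omega))

lemma form_P_sumR : form a t P (∑ i ∈ Finset.Icc 1 t, R i) = 0 := by
  rw [form_sum_right, Finset.sum_eq_zero]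
  intro i hi; simp only [Finset.mem_Icc] at hi
  rw [form_P_R, if_neg (by omega)]

lemma form_sumR_P : form a t (∑ i ∈ Finset.Icc 1 t, R i) P = 0 := by
  rw [form_sum_left, Finset.sum_eq_zero]
  intro i hi; simp only [Finset.mem_Icc] at hi
  rw [form_R_P, if_neg (by omega)]

lemma form_Q_sumR : form a t Q (∑ i ∈ Finset.Icc 1 t, R i) = 0 := by
  rw [form_sum_right, Finset.sum_eq_zero]
  intro i hi; simp only [Finset.mem_Icc] at hi
  rw [form_Q_R, if_neg (by omega)]

lemma form_sumR_Q : form a t (∑ i ∈ Finset.Icc 1 t, R i) Q = 0 := by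
  rw [form_sum_left, Finset.sum_eq_zero]
  intro i hi; simp only [Finset.mem_Icc] at hi
  rw [form_R_Q, if_neg (by omega)]

lemma form_R_sumR (j : ℕ) : form a t (R j) (∑ i ∈ Finset.Icc 1 t, R i) =
    if 1 ≤ j ∧ j ≤ t then -1 else 0 := by
  rw [form_sum_right]
  by_cases h : 1 ≤ j ∧ j ≤ t
  · rw [if_pos h, Finset.sum_eq_single j]
    · rw [form_R_R, if_neg (by omega), if_pos ⟨rfl, h⟩]; ring
    · intro m hm hne; simp only [Finset.mem_Icc] at hm
      rw [form_R_R, if_neg (by omega), if_neg (by omega)]; ring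
    · intro hnj; exact absurd (Finset.mem_Icc.mpr (by omega)) hnj
  · rw [if_neg h, Finset.sum_eq_zero]
    intro m hm; simp only [Finset.mem_Icc] at hm
    rw [form_R_R, if_neg (by omega), if_neg (by omega)]; ring

lemma form_sumR_R (j : ℕ) : form a t (∑ i ∈ Finset.Icc 1 t, R i) (R j) =
    if 1 ≤ j ∧ j ≤ t then -1 else 0 := by
  rw [form_sum_left]
  by_cases h : 1 ≤ j ∧ j ≤ t
  · rw [if_pos h, Finset.sum_eq_single j]
    · rw [form_R_R, if_neg (by omega), if_pos ⟨rfl, h⟩]; ring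
    · intro m hm hne; simp only [Finset.mem_Icc] at hm
      rw [form_R_R, if_neg (by omega), if_neg (by omega)]; ring
    · intro hnj; exact absurd (Finset.mem_Icc.mpr (by omega)) hnj
  · rw [if_neg h, Finset.sum_eq_zero]
    intro m hm; simp only [Finset.mem_Icc] at hm
    rw [form_R_R, if_neg (by omega), if_neg (by omega)]; ring

end Helpers

lemma tele (b c : ℕ) (h : b ≤ c) :
    ∑ i ∈ Finset.Ico b c, (R i - R (i+1)) = R b - R c := by
  rw [Finset.sum_Ico_eq_sum_range]
  have h2 := Finset.sum_range_sub' (fun j => R (b + j)) (c - b)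
  rw [show b + (c - b) = c by omega] at h2
  exact h2

set_option maxHeartbeats 40000000 in
lemma part1 (a s : ℤ) (t r : ℕ) (hr : r ≤ t) (k : ℕ) (hk : 1 ≤ k) (hkn : k < t + 4) :
    form a t (A a s t r k) (A a s t r (k + 1)) = 1 := by
  unfold A
  split_ifs <;>
    first
      | (exfalso; (first | assumption | omega))
      | (simp only [form_add_left, form_add_right, form_sub_left, form_sub_right,
          form_smul_left, form_smul_right, form_P_P, form_P_Q, form_Q_P, form_Q_Q,
          form_P_R, form_R_P, form_Q_R, form_R_Q, form_R_R,
          form_P_sumR, form_sumR_P, form_Q_sumR, form_sumR_Q, form_R_sumR, form_sumR_R] <;>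
         first
           | omega
           | ring1
           | (split_ifs <;> (first | omega | ring1 | (exfalso; (first | assumption | omega))))
           | (exfalso; (first | assumption | omega)))

set_option maxHeartbeats 40000000 in
lemma part2 (a s : ℤ) (t r : ℕ) (hr : r ≤ t) :
    form a t (A a s t r (t + 4)) (A a s t r 1) = 1 := by
  unfold A
  split_ifs <;>
    first
      | (exfalso; (first | assumption | omega))
      | (simp only [form_add_left, form_add_right, form_sub_left, form_sub_right,
          form_smul_left, form_smul_right, form_P_P, form_P_Q, form_Q_P, form_Q_Q,
          form_P_R, form_R_P, form_Q_R, form_R_Q, form_R_R,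
          form_P_sumR, form_sumR_P, form_Q_sumR, form_sumR_Q, form_R_sumR, form_sumR_R] <;>
         first
           | omega
           | ring1
           | (split_ifs <;> (first | omega | ring1 | (exfalso; (first | assumption | omega))))
           | (exfalso; (first | assumption | omega)))

set_option maxHeartbeats 100000000 in
lemma part3 (a s : ℤ) (t r : ℕ) (hr : r ≤ t) (k l : ℕ) (hk : 1 ≤ k) (hkl : k < l)
    (hln : l ≤ t + 4) (hlk : l ≠ k + 1) (hne : ¬(k = 1 ∧ l = t + 4)) :
    form a t (A a s t r k) (A a s t r l) = 0 := by
  unfold A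
  split_ifs <;>
    first
      | (exfalso; (first | assumption | omega))
      | (simp only [form_add_left, form_add_right, form_sub_left, form_sub_right,
          form_smul_left, form_smul_right, form_P_P, form_P_Q, form_Q_P, form_Q_Q,
          form_P_R, form_R_P, form_Q_R, form_R_Q, form_R_R,
          form_P_sumR, form_sumR_P, form_Q_sumR, form_sumR_Q, form_R_sumR, form_sumR_R] <;>
         first
           | omega
           | ring1
           | (split_ifs <;> (first | omega | ring1 | (exfalso; (first | assumption | omega))))
           | (exfalso; (first | assumption | omega)))

lemma part4 (a s : ℤ) (t r : ℕ) (hr : r ≤ t) :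
    ∑ k ∈ Finset.Icc 1 (t + 4), A a s t r k = -K a t := by
  have hIoc : Finset.Icc 1 (t + 4) = Finset.Ioc 0 (t + 4) := by
    rw [← Finset.Icc_add_one_left_eq_Ioc]; rfl
  rw [hIoc,
    ← Finset.sum_Ioc_consecutive _ (show (0:ℕ) ≤ r+2 by omega) (show r+2 ≤ t+4 by omega),
    ← Finset.sum_Ioc_consecutive _ (show (0:ℕ) ≤ r+1 by omega) (show r+1 ≤ r+2 by omega),
    ← Finset.sum_Ioc_consecutive _ (show (r+2:ℕ) ≤ t+3 by omega) (show t+3 ≤ t+4 by omega),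
    show Finset.Ioc (r+1) (r+2) = {r+2} from by
      ext x; simp only [Finset.mem_Ioc, Finset.mem_singleton]; omega,
    show Finset.Ioc (t+3) (t+4) = {t+4} from by
      ext x; simp only [Finset.mem_Ioc, Finset.mem_singleton]; omega,
    Finset.sum_singleton, Finset.sum_singleton]
  have h2 : A a s t r (r+2) = s • P + Q := by
    unfold A; rw [if_neg (by omega), if_pos rfl]
  have h4 : A a s t r (t+4) = (-(a + s)) • P + Q - ∑ i ∈ Finset.Icc 1 t, R i := by
    unfold A; rw [if_pos rfl]
  have h1 : ∑ k ∈ Finset.Ioc 0 (r+1), A a s t r k = P := by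
    rcases Nat.eq_zero_or_pos r with rfl | hr1
    · rw [show Finset.Ioc 0 (0+1) = {1} from by
        ext x; simp only [Finset.mem_Ioc, Finset.mem_singleton]; omega,
        Finset.sum_singleton]
      unfold A
      rw [if_neg (by omega), if_neg (by omega), if_pos (by omega), if_pos rfl]
    · rw [← Finset.sum_Ioc_consecutive _ (show (0:ℕ) ≤ 1 by omega) (show 1 ≤ r+1 by omega),
        ← Finset.sum_Ioc_consecutive _ (show (1:ℕ) ≤ r by omega) (show r ≤ r+1 by omega),
        show Finset.Ioc 0 1 = {1} from by
          ext x; simp only [Finset.mem_Ioc, Finset.mem_singleton]; omega,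
        show Finset.Ioc r (r+1) = {r+1} from by
          ext x; simp only [Finset.mem_Ioc, Finset.mem_singleton]; omega,
        Finset.sum_singleton, Finset.sum_singleton]
      have e1 : A a s t r 1 = R r := by
        unfold A
        rw [if_neg (by omega), if_neg (by omega), if_pos (by omega), if_neg (by omega),
          if_pos rfl]
      have e3 : A a s t r (r+1) = P - R 1 := by
        unfold A
        rw [if_neg (by omega), if_neg (by omega), if_pos (by omega), if_neg (by omega),
          if_neg (by omega), if_neg (by omega)]
      have e2 : ∑ k ∈ Finset.Ioc 1 r, A a s t r k = R 1 - R r := by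
        have hcg : ∀ k ∈ Finset.Ioc 1 r, A a s t r k = R (r - k + 1) - R (r - k + 2) := by
          intro k hk; simp only [Finset.mem_Ioc] at hk
          unfold A
          rw [if_neg (by omega), if_neg (by omega), if_pos (by omega), if_neg (by omega),
            if_neg (by omega), if_pos (by omega)]
        rw [Finset.sum_congr rfl hcg, ← tele 1 r (by omega)]
        refine Finset.sum_nbij' (fun k => r + 1 - k) (fun i => r + 1 - i) ?_ ?_ ?_ ?_ ?_
        · intro x hx; simp only [Finset.mem_Ioc] at hx; simp only [Finset.mem_Ico]; omega
        · intro x hx; simp only [Finset.mem_Ico] at hx; simp only [Finset.mem_Ioc]; omega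
        · intro x hx; simp only [Finset.mem_Ioc] at hx; beta_reduce; omega
        · intro x hx; simp only [Finset.mem_Ico] at hx; beta_reduce; omega
        · intro x hx; simp only [Finset.mem_Ioc] at hx; beta_reduce
          rw [show r - x + 1 = r + 1 - x by omega, show r - x + 2 = r + 1 - x + 1 by omega]
      rw [e1, e2, e3]; abel
  have h3 : ∑ k ∈ Finset.Ioc (r+2) (t+3), A a s t r k = P := by
    rcases eq_or_lt_of_le hr with rfl | hrt
    · rw [show Finset.Ioc (r+2) (r+3) = {r+3} from by
        ext x; simp only [Finset.mem_Ioc, Finset.mem_singleton]; omega,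
        Finset.sum_singleton]
      unfold A
      rw [if_neg (by omega), if_neg (by omega), if_neg (by omega), if_pos rfl]
    · rw [← Finset.sum_Ioc_consecutive _ (show (r+2:ℕ) ≤ t+2 by omega) (show t+2 ≤ t+3 by omega),
        ← Finset.sum_Ioc_consecutive _ (show (r+2:ℕ) ≤ r+3 by omega) (show r+3 ≤ t+2 by omega),
        show Finset.Ioc (r+2) (r+3) = {r+3} from by
          ext x; simp only [Finset.mem_Ioc, Finset.mem_singleton]; omega,
        show Finset.Ioc (t+2) (t+3) = {t+3} from by
          ext x; simp only [Finset.mem_Ioc, Finset.mem_singleton]; omega,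
        Finset.sum_singleton, Finset.sum_singleton]
      have e1 : A a s t r (r+3) = P - R (r+1) := by
        unfold A
        rw [if_neg (by omega), if_neg (by omega), if_neg (by omega), if_neg (by omega),
          if_pos rfl]
      have e3 : A a s t r (t+3) = R t := by
        unfold A
        rw [if_neg (by omega), if_neg (by omega), if_neg (by omega), if_neg (by omega),
          if_neg (by omega), if_neg (by omega)]
      have e2 : ∑ k ∈ Finset.Ioc (r+3) (t+2), A a s t r k = R (r+1) - R t := by
        have hcg : ∀ k ∈ Finset.Ioc (r+3) (t+2), A a s t r k = R (k-3) - R (k-2) := by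
          intro k hk; simp only [Finset.mem_Ioc] at hk
          unfold A
          rw [if_neg (by omega), if_neg (by omega), if_neg (by omega), if_neg (by omega),
            if_neg (by omega), if_pos (by omega)]
        rw [Finset.sum_congr rfl hcg, ← tele (r+1) t (by omega)]
        refine Finset.sum_nbij' (fun k => k - 3) (fun i => i + 3) ?_ ?_ ?_ ?_ ?_
        · intro x hx; simp only [Finset.mem_Ioc] at hx; simp only [Finset.mem_Ico]; omega
        · intro x hx; simp only [Finset.mem_Ico] at hx; simp only [Finset.mem_Ioc]; omega
        · intro x hx; simp only [Finset.mem_Ioc] at hx; beta_reduce; omega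
        · intro x hx; simp only [Finset.mem_Ico] at hx; beta_reduce; omega
        · intro x hx; simp only [Finset.mem_Ioc] at hx; beta_reduce
          rw [show x - 2 = x - 3 + 1 by omega]
      rw [e1, e2, e3]; abel
  rw [h1, h2, h3, h4]
  unfold K
  funext j
  simp only [Pi.add_apply, Pi.sub_apply, Pi.neg_apply, Pi.smul_apply, smul_eq_mul,
    Finset.sum_apply]
  ring
/-- for 0 ≤ r ≤ t the above tuple of t + 4 elements is a toric
system on the Picard lattice of F_a blown up in two rounds. -/
theorem blowup_hirzebruch_toric_system (a s : ℤ) (t r : ℕ) (hr : r ≤ t) :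
    let n := t + 4
    (∀ k, 1 ≤ k → k < n → form a t (A a s t r k) (A a s t r (k + 1)) = 1) ∧
    (form a t (A a s t r n) (A a s t r 1) = 1) ∧
    (∀ k l, 1 ≤ k → k < l → l ≤ n → l ≠ k + 1 → ¬(k = 1 ∧ l = n) →
      form a t (A a s t r k) (A a s t r l) = 0) ∧
    (∑ k ∈ Finset.Icc 1 n, A a s t r k = -K a t) := by
  exact ⟨fun k hk hkn => part1 a s t r hr k hk hkn,
    part2 a s t r hr,
    fun k l hk hkl hln hlk hne => part3 a s t r hr k l hk hkl hln hlk hne,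
    part4 a s t r hr⟩

end Stmt8
end

section
/- In the Picard lattice ℤ^{1+t} of P² blown up at t points (basis H, R_1, ..., R_t; H² = 1, R_i² = -1, other products 0), the divisors D of the toric system R_t, R_{t-1}-R_t, ..., R_1-R_2, H-R_1, H, H-ΣR_i satisfy Σ_I h-values: the sum over all intervals I ⊆ {1, ..., n-1} of χ(Σ_{i∈I} A_i) equals 9t + 15, where n = t + 3, χ(D) = 1 + (1/2)(D² - K.D), K = -3H + ΣR_i. -/
namespace Stmt16

/-- Basis vectors: index 0 is H, indices 1, ..., t are R_1, ..., R_t. -/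
def e (i : ℕ) : ℕ → ℤ := fun j => if j = i then 1 else 0

/-- The intersection form: H² = 1, R_i² = -1, mixed products 0. -/
def form (t : ℕ) (x y : ℕ → ℤ) : ℤ :=
  x 0 * y 0 - ∑ i ∈ Finset.Icc 1 t, x i * y i

/-- The canonical class K = -3H + R_1 + ... + R_t. -/
def K (t : ℕ) : ℕ → ℤ := (-3) • e 0 + ∑ i ∈ Finset.Icc 1 t, e i

/-- χ(D) = 1 + (D² - K.D)/2. -/
def chi (t : ℕ) (D : ℕ → ℤ) : ℚ :=
  1 + ((form t D D : ℚ) - (form t (K t) D : ℚ)) / 2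

/-- The toric system R_t, R_{t-1} - R_t, ..., R_1 - R_2, H - R_1, H, H - ΣR_i,
indexed by k = 1, ..., t + 3. -/
def A (t : ℕ) (k : ℕ) : ℕ → ℤ :=
  if k = 1 then e t
  else if k ≤ t then e (t - k + 1) - e (t - k + 2)
  else if k = t + 1 then e 0 - e 1
  else if k = t + 2 then e 0
  else e 0 - ∑ i ∈ Finset.Icc 1 t, e i

lemma form_add_left (t : ℕ) (x y z : ℕ → ℤ) :
    form t (x + y) z = form t x z + form t y z := by
  simp only [form, Pi.add_apply, add_mul, Finset.sum_add_distrib]; ring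

lemma form_comm (t : ℕ) (x y : ℕ → ℤ) : form t x y = form t y x := by
  simp only [form, mul_comm]

lemma form_sub_left (t : ℕ) (x y z : ℕ → ℤ) :
    form t (x - y) z = form t x z - form t y z := by
  simp only [form, Pi.sub_apply, sub_mul, Finset.sum_sub_distrib]; ring

lemma form_add_right (t : ℕ) (x y z : ℕ → ℤ) :
    form t x (y + z) = form t x y + form t x z := by
  rw [form_comm, form_add_left, form_comm t y, form_comm t z]

lemma form_sub_right (t : ℕ) (x y z : ℕ → ℤ) :
    form t x (y - z) = form t x y - form t x z := by
  rw [form_comm, form_sub_left, form_comm t y, form_comm t z]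

lemma form_zero_left (t : ℕ) (x : ℕ → ℤ) : form t 0 x = 0 := by
  simp [form]

lemma form_zero_right (t : ℕ) (x : ℕ → ℤ) : form t x 0 = 0 := by
  simp [form]

lemma form_e_zero (t : ℕ) : form t (e 0) (e 0) = 1 := by
  simp [form, e, Finset.mem_Icc]

lemma form_e_self (t : ℕ) {j : ℕ} (h1 : 1 ≤ j) (h2 : j ≤ t) :
    form t (e j) (e j) = -1 := by
  simp only [form, e]
  rw [Finset.sum_congr rfl (fun i _ => by
    split <;> simp : ∀ i ∈ Finset.Icc 1 t,
      (if i = j then (1:ℤ) else 0) * (if i = j then 1 else 0) = if i = j then 1 else 0)]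
  rw [Finset.sum_ite_eq' (Finset.Icc 1 t) j (fun _ => (1:ℤ))]
  have hj0 : j ≠ 0 := by omega
  simp [Finset.mem_Icc, h1, h2, Ne.symm hj0]

lemma form_e_ne (t : ℕ) {i j : ℕ} (h : i ≠ j) : form t (e i) (e j) = 0 := by
  simp only [form, e]
  have : ∀ m, (if m = i then (1:ℤ) else 0) * (if m = j then 1 else 0) = 0 := by
    intro m; split <;> split <;> simp_all
  simp only [this, Finset.sum_const_zero, sub_zero]


lemma K_apply (t m : ℕ) : K t m =
    (if m = 0 then -3 else 0) + (if m ∈ Finset.Icc 1 t then 1 else 0) := by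
  simp only [K, Pi.add_apply, Pi.smul_apply, smul_eq_mul, Finset.sum_apply, e]
  rw [Finset.sum_ite_eq (Finset.Icc 1 t) m (fun _ => (1:ℤ))]
  rcases eq_or_ne m 0 with h | h <;> simp [h]

lemma form_K_e (t : ℕ) (j : ℕ) : form t (K t) (e j) =
    (if j = 0 then -3 else 0) - (if 1 ≤ j ∧ j ≤ t then 1 else 0) := by
  simp only [form, e]
  have h0 : K t 0 = -3 := by simp [K_apply]
  rw [h0]
  have : ∀ i ∈ Finset.Icc 1 t, K t i * (if i = j then (1:ℤ) else 0)
      = if i = j then 1 else 0 := by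
    intro i hi
    rcases eq_or_ne i j with h | h
    · simp only [Finset.mem_Icc] at hi
      have : K t i = 1 := by simp [K_apply, Finset.mem_Icc, hi.1, hi.2]; omega
      subst h; simp [this]
    · simp [h]
  rw [Finset.sum_congr rfl this, Finset.sum_ite_eq' (Finset.Icc 1 t) j (fun _ => (1:ℤ))]
  rcases eq_or_ne j 0 with h | h
  · simp [h]
  · have : (0:ℕ) ≠ j := Ne.symm h
    simp [Finset.mem_Icc, this, h]

/-- Partial sums of the toric system. -/
def P (t : ℕ) (k : ℕ) : ℕ → ℤ :=
  if k = 0 then 0 else if k ≤ t then e (t - k + 1)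
  else if k = t + 1 then e 0 else e 0 + e 0

lemma sumA (t : ℕ) (ht : 1 ≤ t) (k : ℕ) (hk : k ≤ t + 2) :
    ∑ i ∈ Finset.Icc 1 k, A t i = P t k := by
  induction k with
  | zero => simp [P]
  | succ k ih =>
    rw [show Finset.Icc 1 (k+1) = insert (k+1) (Finset.Icc 1 k) by
      ext m; simp [Finset.mem_Icc]; omega]
    rw [Finset.sum_insert (by simp [Finset.mem_Icc])]
    rw [ih (by omega)]
    rcases Nat.lt_or_ge k 1 with h | h
    · -- k = 0
      have hk0 : k = 0 := by omega
      subst hk0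
      have hA : A t 1 = e t := by rw [A, if_pos rfl]
      have hP0 : P t 0 = 0 := by rw [P, if_pos rfl]
      have hP1 : P t 1 = e t := by
        rw [P, if_neg one_ne_zero, if_pos ht, show t - 1 + 1 = t by omega]
      rw [hA, hP0, hP1]; abel
    · rcases Nat.lt_or_ge (k+1) (t+1) with h2 | h2
      · -- 1 ≤ k, k+1 ≤ t
        have hA : A t (k+1) = e (t - (k+1) + 1) - e (t - (k+1) + 2) := by
          rw [A, if_neg (by omega), if_pos (by omega)]
        have hP1 : P t k = e (t - k + 1) := by
          rw [P, if_neg (by omega), if_pos (by omega)]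
        have hP2 : P t (k+1) = e (t - (k+1) + 1) := by
          rw [P, if_neg (by omega), if_pos (by omega)]
        rw [hA, hP1, hP2, show t - (k+1) + 2 = t - k + 1 by omega]
        abel
      · rcases Nat.lt_or_ge (k+1) (t+2) with h3 | h3
        · -- k+1 = t+1, k = t
          have hkt : k = t := by omega
          have hA : A t (k+1) = e 0 - e 1 := by
            rw [A, if_neg (by omega), if_neg (by omega), if_pos (by omega)]
          have hP1 : P t k = e 1 := by
            rw [P, if_neg (by omega), if_pos (by omega), show t - k + 1 = 1 by omega]
          have hP2 : P t (k+1) = e 0 := by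
            rw [P, if_neg (by omega), if_neg (by omega), if_pos (by omega : k+1 = t+1)]
          rw [hA, hP1, hP2]; abel
        · -- k+1 = t+2
          have hA : A t (k+1) = e 0 := by
            rw [A, if_neg (by omega), if_neg (by omega), if_neg (by omega),
              if_pos (by omega)]
          have hP1 : P t k = e 0 := by
            rw [P, if_neg (by omega), if_neg (by omega), if_pos (by omega)]
          have hP2 : P t (k+1) = e 0 + e 0 := by
            rw [P, if_neg (by omega), if_neg (by omega), if_neg (by omega)]
          rw [hA, hP1, hP2]

lemma sumA_interval (t : ℕ) (ht : 1 ≤ t) (a b : ℕ) (ha : 1 ≤ a) (hab : a ≤ b)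
    (hb : b ≤ t + 2) :
    ∑ i ∈ Finset.Icc a b, A t i = P t b - P t (a - 1) := by
  have hsplit : Finset.Icc 1 b = Finset.Icc 1 (a-1) ∪ Finset.Icc a b := by
    ext m; simp [Finset.mem_Icc, Finset.mem_union]; omega
  have hdisj : Disjoint (Finset.Icc 1 (a-1)) (Finset.Icc a b) := by
    rw [Finset.disjoint_left]; intro m hm hm'
    simp [Finset.mem_Icc] at hm hm'; omega
  have := Finset.sum_union (f := A t) hdisj
  rw [← hsplit] at this
  rw [sumA t ht b hb, sumA t ht (a-1) (by omega)] at this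
  rw [eq_comm, sub_eq_iff_eq_add, this]
  abel

lemma form_K_e0 (t : ℕ) : form t (K t) (e 0) = -3 := by
  rw [form_K_e]; norm_num

lemma form_K_er (t : ℕ) {j : ℕ} (h1 : 1 ≤ j) (h2 : j ≤ t) :
    form t (K t) (e j) = -1 := by
  rw [form_K_e, if_neg (by omega : ¬ j = 0), if_pos ⟨h1, h2⟩]; norm_num

lemma chi_eval (t : ℕ) (u v : ℕ → ℤ) (quu quv qvu qvv ku kv : ℤ)
    (h1 : form t u u = quu) (h2 : form t u v = quv) (h3 : form t v u = qvu)
    (h4 : form t v v = qvv) (h5 : form t (K t) u = ku) (h6 : form t (K t) v = kv) :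
    chi t (u - v) = 1 + (((quu : ℚ) - quv - qvu + qvv) - ((ku : ℚ) - kv)) / 2 := by
  rw [chi, form_sub_left, form_sub_right, form_sub_right, form_sub_right,
    h1, h2, h3, h4, h5, h6]
  push_cast; ring

/-- The chi value of the interval [a, b]. -/
def g (t a b : ℕ) : ℚ :=
  if b ≤ t then (if a = 1 then 1 else 0)
  else if b = t + 1 then (if a = 1 then 3 else 2)
  else if a = 1 then 6 else if a = t + 2 then 3 else 5

lemma chi_interval (t : ℕ) (ht : 1 ≤ t) (a b : ℕ) (ha : 1 ≤ a) (hab : a ≤ b)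
    (hb : b ≤ t + 2) :
    chi t (∑ i ∈ Finset.Icc a b, A t i) = g t a b := by
  rw [sumA_interval t ht a b ha hab hb]
  have h2e : form t (e 0 + e 0) (e 0 + e 0) = 4 := by
    simp only [form_add_left, form_add_right, form_e_zero t]; ring
  have hK2e : form t (K t) (e 0 + e 0) = -6 := by
    rw [form_add_right, form_K_e0]; ring
  rcases Nat.lt_or_ge b (t+1) with hbt | hbt
  · -- b ≤ t
    have hPb : P t b = e (t - b + 1) := by
      rw [P, if_neg (by omega), if_pos (by omega)]
    have hj1 : 1 ≤ t - b + 1 := by omega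
    have hj2 : t - b + 1 ≤ t := by omega
    rcases eq_or_ne a 1 with ha1 | ha1
    · have hPa : P t (a-1) = 0 := by rw [ha1, P]; norm_num
      rw [hPb, hPa, chi_eval t _ _ (-1) 0 0 0 (-1) 0 (form_e_self t hj1 hj2)
        (form_zero_right t _) (form_zero_left t _) (form_zero_left t _)
        (form_K_er t hj1 hj2) (form_zero_right t _)]
      rw [g, if_pos (by omega : b ≤ t), if_pos ha1]
      norm_num
    · have hPa : P t (a-1) = e (t - (a-1) + 1) := by
        rw [P, if_neg (by omega), if_pos (by omega)]
      have hi1 : 1 ≤ t - (a-1) + 1 := by omega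
      have hi2 : t - (a-1) + 1 ≤ t := by omega
      have hne : t - b + 1 ≠ t - (a-1) + 1 := by omega
      rw [hPb, hPa, chi_eval t _ _ (-1) 0 0 (-1) (-1) (-1)
        (form_e_self t hj1 hj2) (form_e_ne t hne) (form_e_ne t (Ne.symm hne))
        (form_e_self t hi1 hi2) (form_K_er t hj1 hj2) (form_K_er t hi1 hi2)]
      rw [g, if_pos (by omega : b ≤ t), if_neg ha1]
      norm_num
  · rcases Nat.lt_or_ge b (t+2) with hbt2 | hbt2
    · -- b = t+1
      have hPb : P t b = e 0 := by
        rw [P, if_neg (by omega), if_neg (by omega), if_pos (by omega : b = t+1)]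
      rcases eq_or_ne a 1 with ha1 | ha1
      · have hPa : P t (a-1) = 0 := by rw [ha1, P]; norm_num
        rw [hPb, hPa, chi_eval t _ _ 1 0 0 0 (-3) 0 (form_e_zero t)
          (form_zero_right t _) (form_zero_left t _) (form_zero_left t _)
          (form_K_e0 t) (form_zero_right t _)]
        rw [g, if_neg (by omega : ¬ b ≤ t), if_pos (by omega : b = t+1), if_pos ha1]
        norm_num
      · have hPa : P t (a-1) = e (t - (a-1) + 1) := by
          rw [P, if_neg (by omega), if_pos (by omega)]
        have hi1 : 1 ≤ t - (a-1) + 1 := by omega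
        have hi2 : t - (a-1) + 1 ≤ t := by omega
        have hne : (0:ℕ) ≠ t - (a-1) + 1 := by omega
        rw [hPb, hPa, chi_eval t _ _ 1 0 0 (-1) (-3) (-1)
          (form_e_zero t) (form_e_ne t hne) (form_e_ne t (Ne.symm hne))
          (form_e_self t hi1 hi2) (form_K_e0 t) (form_K_er t hi1 hi2)]
        rw [g, if_neg (by omega : ¬ b ≤ t), if_pos (by omega : b = t+1), if_neg ha1]
        norm_num
    · -- b = t+2
      have hPb : P t b = e 0 + e 0 := by
        rw [P, if_neg (by omega), if_neg (by omega), if_neg (by omega)]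
      rcases eq_or_ne a 1 with ha1 | ha1
      · have hPa : P t (a-1) = 0 := by rw [ha1, P]; norm_num
        rw [hPb, hPa, chi_eval t _ _ 4 0 0 0 (-6) 0 h2e
          (form_zero_right t _) (form_zero_left t _) (form_zero_left t _)
          hK2e (form_zero_right t _)]
        rw [g, if_neg (by omega : ¬ b ≤ t), if_neg (by omega : ¬ b = t+1), if_pos ha1]
        norm_num
      · rcases eq_or_ne a (t+2) with ha2 | ha2
        · have hPa : P t (a-1) = e 0 := by
            rw [P, if_neg (by omega), if_neg (by omega), if_pos (by omega : a-1 = t+1)]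
          have h1 : form t (e 0 + e 0) (e 0) = 2 := by
            rw [form_add_left, form_e_zero t]; ring
          have h2 : form t (e 0) (e 0 + e 0) = 2 := by
            rw [form_add_right, form_e_zero t]; ring
          rw [hPb, hPa, chi_eval t _ _ 4 2 2 1 (-6) (-3) h2e h1 h2
            (form_e_zero t) hK2e (form_K_e0 t)]
          rw [g, if_neg (by omega : ¬ b ≤ t), if_neg (by omega : ¬ b = t+1),
            if_neg ha1, if_pos ha2]
          norm_num
        · have hPa : P t (a-1) = e (t - (a-1) + 1) := by
            rw [P, if_neg (by omega), if_pos (by omega)]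
          have hi1 : 1 ≤ t - (a-1) + 1 := by omega
          have hi2 : t - (a-1) + 1 ≤ t := by omega
          have hne : (0:ℕ) ≠ t - (a-1) + 1 := by omega
          have h1 : form t (e 0 + e 0) (e (t - (a-1) + 1)) = 0 := by
            rw [form_add_left, form_e_ne t hne]; ring
          have h2 : form t (e (t - (a-1) + 1)) (e 0 + e 0) = 0 := by
            rw [form_add_right, form_e_ne t (Ne.symm hne)]; ring
          rw [hPb, hPa, chi_eval t _ _ 4 0 0 (-1) (-6) (-1) h2e h1 h2
            (form_e_self t hi1 hi2) hK2e (form_K_er t hi1 hi2)]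
          rw [g, if_neg (by omega : ¬ b ≤ t), if_neg (by omega : ¬ b = t+1),
            if_neg ha1, if_neg ha2]
          norm_num

lemma row_sum (t : ℕ) (ht : 1 ≤ t) (a : ℕ) (ha : 1 ≤ a) (ha2 : a ≤ t + 1) :
    ∑ b ∈ Finset.Icc a (t+2), g t a b = (if a = 1 then (t:ℚ) + 9 else 7) := by
  rw [Finset.sum_Icc_succ_top (by omega : a ≤ t+2),
    Finset.sum_Icc_succ_top (by omega : a ≤ t+1)]
  have hconst : ∀ b ∈ Finset.Icc a t, g t a b = (if a = 1 then (1:ℚ) else 0) := by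
    intro b hb
    simp only [Finset.mem_Icc] at hb
    rw [g, if_pos hb.2]
  rw [Finset.sum_congr rfl hconst, Finset.sum_const, Nat.card_Icc]
  have hg1 : g t a (t+1) = if a = 1 then (3:ℚ) else 2 := by
    rw [g, if_neg (by omega), if_pos rfl]
  have hg2 : g t a (t+2) = if a = 1 then (6:ℚ) else 5 := by
    rw [g, if_neg (by omega), if_neg (by omega)]
    rcases eq_or_ne a 1 with h | h
    · rw [if_pos h, if_pos h]
    · rw [if_neg h, if_neg h, if_neg (by omega : ¬ a = t + 2)]
  rw [hg1, hg2]
  rcases eq_or_ne a 1 with h | h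
  · subst h
    rw [if_pos rfl, if_pos rfl, if_pos rfl, show t + 1 - 1 = t by omega]
    simp [nsmul_eq_mul]
    ring
  · rw [if_neg h, if_neg h, if_neg h]
    simp [h]
    norm_num

/-- with n = t + 3, the sum over all nonempty intervals
I ⊆ {1, ..., n-1} of χ(Σ_{i ∈ I} A_i), plus t + 3 (for the idempotents),
equals 9t + 15. -/
theorem interval_chi_sum (t : ℕ) (ht : 1 ≤ t) :
    let n := t + 3
    (∑ p ∈ (Finset.Icc 1 (n - 1) ×ˢ Finset.Icc 1 (n - 1)).filter
        (fun p => p.1 ≤ p.2),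
      chi t (∑ i ∈ Finset.Icc p.1 p.2, A t i)) + ((t : ℚ) + 3)
      = 9 * (t : ℚ) + 15 := by
  intro n
  have hn : n - 1 = t + 2 := rfl
  simp only [hn]
  have step1 : ∀ p ∈ (Finset.Icc 1 (t+2) ×ˢ Finset.Icc 1 (t+2)).filter
      (fun p => p.1 ≤ p.2),
      chi t (∑ i ∈ Finset.Icc p.1 p.2, A t i) = g t p.1 p.2 := by
    intro p hp
    simp only [Finset.mem_filter, Finset.mem_product, Finset.mem_Icc] at hp
    exact chi_interval t ht p.1 p.2 hp.1.1.1 hp.2 hp.1.2.2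
  rw [Finset.sum_congr rfl step1, Finset.sum_filter, Finset.sum_product]
  have step2 : ∀ a ∈ Finset.Icc 1 (t+2),
      (∑ b ∈ Finset.Icc 1 (t+2), if a ≤ b then g t a b else 0)
        = ∑ b ∈ Finset.Icc a (t+2), g t a b := by
    intro a ha
    simp only [Finset.mem_Icc] at ha
    rw [← Finset.sum_filter]
    congr 1
    ext b
    simp only [Finset.mem_filter, Finset.mem_Icc]
    omega
  rw [Finset.sum_congr rfl step2]
  rw [Finset.sum_Icc_succ_top (by omega : 1 ≤ t+2)]
  have hrows : ∀ a ∈ Finset.Icc 1 (t+1),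
      (∑ b ∈ Finset.Icc a (t+2), g t a b) = (if a = 1 then (t:ℚ) + 9 else 7) := by
    intro a ha
    simp only [Finset.mem_Icc] at ha
    exact row_sum t ht a ha.1 ha.2
  rw [Finset.sum_congr rfl hrows]
  have hlast : ∑ b ∈ Finset.Icc (t+2) (t+2), g t (t+2) b = 3 := by
    rw [Finset.Icc_self, Finset.sum_singleton, g, if_neg (by omega),
      if_neg (by omega), if_neg (by omega), if_pos rfl]
  rw [hlast]
  rw [show Finset.Icc 1 (t+1) = insert 1 (Finset.Icc 2 (t+1)) by
    ext m; simp [Finset.mem_Icc]; omega]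
  rw [Finset.sum_insert (by simp [Finset.mem_Icc])]
  rw [if_pos rfl]
  have hrest : ∑ a ∈ Finset.Icc 2 (t+1), (if a = 1 then (t:ℚ) + 9 else 7)
      = ∑ a ∈ Finset.Icc 2 (t+1), (7:ℚ) := by
    apply Finset.sum_congr rfl
    intro a ha
    simp only [Finset.mem_Icc] at ha
    rw [if_neg (by omega)]
  rw [hrest, Finset.sum_const, Nat.card_Icc, show t + 1 + 1 - 2 = t by omega,
    nsmul_eq_mul]
  ring

end Stmt16
end

section
/- Let l_1, ..., l_n ∈ ℤ² be defined from a toric system A_1, ..., A_n in a lattice L of rank n-2 as the images of the standard basis of ℤ^n under the cokernel map of D ↦ (A_1.D, ..., A_n.D), where this map is injective with image a rank-(n-2) direct summand. Then for each i (cyclically), (l_i, l_{i+1}) is a basis of ℤ². -/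
private lemma span_pair_det_unit (u v : ℤ × ℤ)
    (h1 : ((1 : ℤ), (0 : ℤ)) ∈ Submodule.span ℤ ({u, v} : Set (ℤ × ℤ)))
    (h2 : ((0 : ℤ), (1 : ℤ)) ∈ Submodule.span ℤ ({u, v} : Set (ℤ × ℤ))) :
    IsUnit (u.1 * v.2 - u.2 * v.1) := by
  obtain ⟨a, b, hab⟩ := Submodule.mem_span_pair.mp h1
  obtain ⟨c, d, hcd⟩ := Submodule.mem_span_pair.mp h2
  have e1 : a * u.1 + b * v.1 = 1 := by
    have := congrArg Prod.fst hab; simpa [smul_eq_mul] using this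
  have e2 : a * u.2 + b * v.2 = 0 := by
    have := congrArg Prod.snd hab; simpa [smul_eq_mul] using this
  have e3 : c * u.1 + d * v.1 = 0 := by
    have := congrArg Prod.fst hcd; simpa [smul_eq_mul] using this
  have e4 : c * u.2 + d * v.2 = 1 := by
    have := congrArg Prod.snd hcd; simpa [smul_eq_mul] using this
  refine IsUnit.of_mul_eq_one (a * d - b * c) ?_
  calc (u.1 * v.2 - u.2 * v.1) * (a * d - b * c)
      = (a * u.1 + b * v.1) * (c * u.2 + d * v.2)
        - (a * u.2 + b * v.2) * (c * u.1 + d * v.1) := by ring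
    _ = 1 := by rw [e1, e2, e3, e4]; ring

private lemma fin_two_cases {n : ℕ} [NeZero n] (hn : n = 2) (a b : Fin n) :
    a = b ∨ a = b + 1 := by
  subst hn
  fin_cases a <;> fin_cases b <;> simp

/-- Let A_1, ..., A_n be a toric system on a lattice L of rank
n - 2, such that the map L → ℤⁿ, D ↦ (A_i.D)_i, is injective with cokernel ℤ²
(expressed via a surjection π : ℤⁿ → ℤ² whose kernel is exactly the image).
Then the images l_i = π(standard basis) satisfy: each consecutive pair
(l_i, l_{i+1}) (cyclically) is a basis of ℤ², i.e. has unit determinant. -/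
theorem gale_dual_consecutive_basis (L : Type*) [AddCommGroup L] [Module.Free ℤ L]
    (n : ℕ) [NeZero n] (hrank : Module.finrank ℤ L = n - 2)
    (B : L →+ L →+ ℤ) (hsym : ∀ x y, B x y = B y x) (K : L)
    (A : Fin n → L)
    (hadj : ∀ i, B (A i) (A (i + 1)) = 1)
    (horth : ∀ i j : Fin n, j ≠ i → j ≠ i + 1 → i ≠ j + 1 → B (A i) (A j) = 0)
    (hsum : ∑ i, A i = -K)
    (φ : L →+ (Fin n → ℤ)) (hφ : ∀ D i, φ D i = B (A i) D)
    (hinj : Function.Injective φ)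
    (π : (Fin n → ℤ) →+ ℤ × ℤ) (hsurj : Function.Surjective π)
    (hexact : ∀ x, π x = 0 ↔ ∃ D, φ D = x)
    (l : Fin n → ℤ × ℤ) (hl : ∀ i, l i = π (Pi.single i 1)) :
    ∀ i, IsUnit ((l i).1 * (l (i + 1)).2 - (l i).2 * (l (i + 1)).1) := by
  intro i
  classical
  by_cases hn1 : n = 1
  · -- n = 1 : π : ℤ → ℤ² cannot be surjective
    exfalso
    subst hn1
    obtain ⟨x, hx⟩ := hsurj (1, 0)
    obtain ⟨y, hy⟩ := hsurj (0, 1)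
    have hx1 : x = x 0 • Pi.single 0 1 := by ext k; fin_cases k; simp
    have hy1 : y = y 0 • Pi.single 0 1 := by ext k; fin_cases k; simp
    rw [hx1, map_zsmul] at hx
    rw [hy1, map_zsmul] at hy
    set p := π (Pi.single 0 1) with hp
    have e1 : x 0 * p.1 = 1 := by have := congrArg Prod.fst hx; simpa [smul_eq_mul] using this
    have e2 : x 0 * p.2 = 0 := by have := congrArg Prod.snd hx; simpa [smul_eq_mul] using this
    have e3 : y 0 * p.1 = 0 := by have := congrArg Prod.fst hy; simpa [smul_eq_mul] using this
    have e4 : y 0 * p.2 = 1 := by have := congrArg Prod.snd hy; simpa [smul_eq_mul] using this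
    have : (1 : ℤ) = 0 := by
      calc (1 : ℤ) = (x 0 * p.1) * (y 0 * p.2) := by rw [e1, e4]; ring
        _ = (x 0 * p.2) * (y 0 * p.1) := by ring
        _ = 0 := by rw [e2, e3]; ring
    exact one_ne_zero this
  have hnpos : 0 < n := Nat.pos_of_ne_zero (NeZero.ne n)
  set S := Submodule.span ℤ ({l i, l (i + 1)} : Set (ℤ × ℤ)) with hS
  -- every l j lies in S
  have hmem : ∀ j, l j ∈ S := by
    by_cases hn3 : 3 ≤ n
    · -- the fundamental relation
      have hrel : ∀ j : Fin n, l (j - 1) + B (A j) (A j) • l j + l (j + 1) = 0 := by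
        intro j
        have hv1 : (1 : Fin n).val = 1 := by
          rw [Fin.val_one']
          exact Nat.mod_eq_of_lt (by omega)
        have h10 : (1 : Fin n) ≠ 0 := by
          intro h
          have := congrArg Fin.val h
          rw [hv1, Fin.val_zero] at this
          omega
        have hv2 : ((1 : Fin n) + 1).val = 2 := by
          rw [Fin.val_add, hv1]
          exact Nat.mod_eq_of_lt (by omega)
        have h20 : (1 : Fin n) + 1 ≠ 0 := by
          intro h
          have := congrArg Fin.val h
          rw [hv2, Fin.val_zero] at this
          omega
        have d1 : j - 1 ≠ j := fun h => h10 (sub_eq_self.mp h)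
        have d2 : j + 1 ≠ j := fun h => h10 (add_eq_left.mp h)
        have d3 : j - 1 ≠ j + 1 := by
          intro h
          have h' : j = j + 1 + 1 := sub_eq_iff_eq_add.mp h
          rw [add_assoc] at h'
          exact h20 (add_eq_left.mp h'.symm)
        have hφA : φ (A j) = Pi.single (j - 1) 1 + B (A j) (A j) • Pi.single j 1
            + Pi.single (j + 1) 1 := by
          ext k
          simp only [hφ, Pi.add_apply, Pi.smul_apply, Pi.single_apply, smul_eq_mul]
          by_cases h1 : k = j - 1
          · subst h1
            rw [if_pos rfl, if_neg d1, if_neg d3]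
            have := hadj (j - 1)
            rw [sub_add_cancel] at this
            simp [this]
          · by_cases h2 : k = j
            · subst h2
              rw [if_neg (Ne.symm d1), if_pos rfl, if_neg (Ne.symm d2)]
              ring
            · by_cases h3 : k = j + 1
              · subst h3
                rw [if_neg (fun h => d3 h.symm), if_neg d2, if_pos rfl]
                rw [hsym, hadj j]
                ring
              · rw [horth k j (Ne.symm h2) (fun h => h1 (by rw [h, add_sub_cancel_right])) h3,
                  if_neg h1, if_neg h2, if_neg h3]
                ring
        have h0 : π (φ (A j)) = 0 := (hexact _).mpr ⟨A j, rfl⟩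
        rw [hφA, map_add, map_add, map_zsmul] at h0
        rw [hl (j - 1), hl j, hl (j + 1)]
        exact h0
      open Fin.NatCast in
      have step : ∀ k : ℕ, l (i + (k : Fin n)) ∈ S ∧ l (i + (k : Fin n) + 1) ∈ S := by
        intro k
        induction k with
        | zero =>
          constructor
          · simpa using Submodule.subset_span (by simp : l i ∈ ({l i, l (i + 1)} : Set (ℤ × ℤ)))
          · simpa using Submodule.subset_span
              (by simp : l (i + 1) ∈ ({l i, l (i + 1)} : Set (ℤ × ℤ)))
        | succ k ih =>
          have hcast : ((k + 1 : ℕ) : Fin n) = (k : Fin n) + 1 := by push_cast; ring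
          rw [hcast]
          refine ⟨by rw [← add_assoc]; exact ih.2, ?_⟩
          have hj := hrel (i + (k : Fin n) + 1)
          have hsub : (i + (k : Fin n) + 1) - 1 = i + (k : Fin n) := by abel
          rw [hsub] at hj
          have heq : l (i + (k : Fin n) + 1 + 1)
              = -(l (i + (k : Fin n)) + B (A (i + (k : Fin n) + 1)) (A (i + (k : Fin n) + 1))
                  • l (i + (k : Fin n) + 1)) :=
            eq_neg_of_add_eq_zero_right hj
          rw [← add_assoc, heq]
          exact Submodule.neg_mem _ (Submodule.add_mem _ ih.1
            (Submodule.smul_mem _ _ ih.2))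
      intro j
      open Fin.NatCast in
      have h := (step ((j - i).val)).1
      rwa [Fin.cast_val_eq_self, show i + (j - i) = j by abel] at h
    · -- n = 2
      have hn2 : n = 2 := by omega
      intro j
      rcases fin_two_cases hn2 j i with h | h
      · rw [h]
        exact Submodule.subset_span (by simp)
      · rw [h]
        exact Submodule.subset_span (by simp)
  -- S = ⊤ since π is surjective
  have htop : ∀ z : ℤ × ℤ, z ∈ S := by
    intro z
    obtain ⟨x, hx⟩ := hsurj z
    have hx2 : (∑ j, x j • Pi.single j (1 : ℤ)) = x := by
      ext k
      simp [Finset.sum_apply, Pi.single_apply, mul_ite, Finset.sum_ite_eq]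
    have hπ : π x = ∑ j, x j • l j := by
      conv_lhs => rw [← hx2]
      rw [map_sum]
      exact Finset.sum_congr rfl fun j _ => by rw [map_zsmul, hl]
    rw [← hx, hπ]
    exact Submodule.sum_mem _ fun j _ => Submodule.smul_mem _ _ (hmem j)
  exact span_pair_det_unit (l i) (l (i + 1)) (htop _) (htop _)
end
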